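/- arXiv:2412.16593 — 3 statements merged into one kernel-verified Lean document; each statement's English description precedes it below -/
import Mathlib

section
/- Let φ(z₁,z₂) = (2z₁z₂ - z₁ - z₂)/(2 - z₁ - z₂). Then for every ζ ∈ ℂ with |ζ| = 1 and every (z₁,z₂) ∈ 𝔻²: |φ(z₁,z₂) - ζ| ≥ (1/8)·(1-|z₁|)²·(1-|z₂|)². -/
open Complex

noncomputable section

lemma agler (z₁ z₂ : ℂ) :
    ‖2 - z₁ - z₂‖ ^ 2 - ‖2 * z₁ * z₂ - z₁ - z₂‖ ^ 2 =
      2 * (1 - ‖z₁‖ ^ 2) * ‖1 - z₂‖ ^ 2 +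
        2 * (1 - ‖z₂‖ ^ 2) * ‖1 - z₁‖ ^ 2 := by
  simp only [Complex.sq_norm, Complex.normSq_apply, Complex.sub_re, Complex.sub_im,
    Complex.mul_re, Complex.mul_im, Complex.one_re, Complex.one_im, Complex.re_ofNat,
    Complex.im_ofNat]
  ring

/-- estimate in Example 5.1 of the paper. For
`φ = (2z₁z₂ - z₁ - z₂)/(2 - z₁ - z₂)`, every unimodular `ζ` and every `(z₁,z₂) ∈ 𝔻²`,
`|φ(z) - ζ| ≥ (1/8)(1-|z₁|)²(1-|z₂|)²`. -/
theorem statement15 :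
    ∀ ζ : ℂ, ‖ζ‖ = 1 →
      ∀ z₁ z₂ : ℂ, ‖z₁‖ < 1 → ‖z₂‖ < 1 →
        (1 / 8) * (1 - ‖z₁‖) ^ 2 * (1 - ‖z₂‖) ^ 2 ≤
          ‖(2 * z₁ * z₂ - z₁ - z₂) / (2 - z₁ - z₂) - ζ‖ := by
  intro ζ hζ z₁ z₂ h1 h2
  set p : ℂ := 2 - z₁ - z₂ with hp
  set q : ℂ := 2 * z₁ * z₂ - z₁ - z₂ with hq
  set A := ‖z₁‖ with hA
  set B := ‖z₂‖ with hB
  have hA0 : 0 ≤ A := norm_nonneg _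
  have hB0 : 0 ≤ B := norm_nonneg _
  -- |p| bounds
  have hple : ‖p‖ ≤ 4 := by
    calc ‖p‖ ≤ ‖2 - z₁‖ + ‖z₂‖ := by
          simpa [hp, sub_sub] using norm_sub_le (2 - z₁) z₂
      _ ≤ ‖(2 : ℂ)‖ + ‖z₁‖ + ‖z₂‖ := by
          have := norm_sub_le (2 : ℂ) z₁
          linarith
      _ ≤ 4 := by simp only [Complex.norm_two]; linarith
  have hpge : 2 - A - B ≤ ‖p‖ := by
    have h := norm_add_le (p + z₁) z₂
    have h2 : p + z₁ + z₂ = 2 := by rw [hp]; ring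
    rw [h2] at h
    have h3 := norm_add_le p z₁
    simp only [Complex.norm_two] at h
    linarith
  have hppos : 0 < ‖p‖ := by linarith
  have hqle : ‖q‖ ≤ 4 := by
    calc ‖q‖ ≤ ‖2 * z₁ * z₂ - z₁‖ + ‖z₂‖ := by
          simpa [hq, sub_sub] using norm_sub_le (2 * z₁ * z₂ - z₁) z₂
      _ ≤ ‖2 * z₁ * z₂‖ + ‖z₁‖ + ‖z₂‖ := by
          have := norm_sub_le (2 * z₁ * z₂) z₁
          linarith
      _ ≤ 4 := by
          have : ‖2 * z₁ * z₂‖ = 2 * A * B := by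
            simp [norm_mul, Complex.norm_two, hA, hB]
          rw [this]
          nlinarith
  -- lower bounds on |1 - z|
  have h1z₁ : 1 - A ≤ ‖1 - z₁‖ := by
    have h := norm_add_le (1 - z₁) z₁
    simp only [sub_add_cancel, norm_one] at h
    linarith
  have h1z₂ : 1 - B ≤ ‖1 - z₂‖ := by
    have h := norm_add_le (1 - z₂) z₂
    simp only [sub_add_cancel, norm_one] at h
    linarith
  -- Agler sum lower bound
  have hS : 4 * ((1 - A) * (1 - B)) ^ 2 ≤
      ‖p‖ ^ 2 - ‖q‖ ^ 2 := by
    rw [agler z₁ z₂]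
    have e1 : (1 - B) ^ 2 ≤ ‖1 - z₂‖ ^ 2 := by nlinarith
    have e2 : (1 - A) ^ 2 ≤ ‖1 - z₁‖ ^ 2 := by nlinarith
    have f1 : (1 - A) ≤ 1 - A ^ 2 := by nlinarith
    have f2 : (1 - B) ≤ 1 - B ^ 2 := by nlinarith
    nlinarith [sq_nonneg (1 - A), sq_nonneg (1 - B), mul_pos (sub_pos.2 h1) (sub_pos.2 h2),
      mul_nonneg (mul_nonneg hA0 hB0) (mul_nonneg (le_of_lt (sub_pos.2 h1)) (le_of_lt (sub_pos.2 h2)))]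
  -- |p| - |q| ≥ a²b²/2
  have hqnn : 0 ≤ ‖q‖ := norm_nonneg _
  have hdiff : (1 / 2) * ((1 - A) * (1 - B)) ^ 2 ≤ ‖p‖ - ‖q‖ := by
    nlinarith [sq_nonneg ((1 - A) * (1 - B))]
  -- |q|/|p| ≤ 1 - (1/8) a² b²
  have hratio : ‖q‖ / ‖p‖ ≤
      1 - (1 / 8) * (1 - A) ^ 2 * (1 - B) ^ 2 := by
    rw [div_le_iff₀ hppos]
    nlinarith [sq_nonneg ((1 - A) * (1 - B))]
  -- finish
  have hlow : 1 - ‖q‖ / ‖p‖ ≤ ‖q / p - ζ‖ := by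
    have h := norm_add_le (ζ - q / p) (q / p)
    simp only [sub_add_cancel, hζ] at h
    rw [norm_sub_rev, norm_div] at h
    linarith
  calc (1 / 8) * (1 - A) ^ 2 * (1 - B) ^ 2
      ≤ 1 - ‖q‖ / ‖p‖ := by linarith
    _ ≤ ‖q / p - ζ‖ := hlow
end
end

section
/- Let φ(z₁,z₂) = -(2z₁z₂ - z₁ - z₂)/(2 - z₁ - z₂) and Φ = (φ,φ) : 𝔻² → 𝔻². Then the composition operator C_Φ : A²(𝔻²) → A²(𝔻²) is not bounded. -/
open MeasureTheory Complex Set ENNReal NNReal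

noncomputable section

/-- The open unit bidisc `𝔻²`. -/
def biD : Set (ℂ × ℂ) := {z | ‖z.1‖ < 1 ∧ ‖z.2‖ < 1}

/-- The distinguished boundary `𝕋²` (the bitorus). -/
def biT : Set (ℂ × ℂ) := {z | ‖z.1‖ = 1 ∧ ‖z.2‖ = 1}

/-- Normalized area measure on `ℂ²`, i.e. `(1/π²)`·(Lebesgue measure), the product
`dA(z₁)dA(z₂)` of two normalized area measures on the unit disc. -/
def dA2 : Measure (ℂ × ℂ) := (ENNReal.ofReal (Real.pi ^ 2))⁻¹ • volume

/-- The Bergman weight `(1-|z₁|²)^β (1-|z₂|²)^β`. -/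
def w2 (β : ℝ) (z : ℂ × ℂ) : ℝ≥0∞ :=
  ENNReal.ofReal ((1 - ‖z.1‖ ^ 2) ^ β * (1 - ‖z.2‖ ^ 2) ^ β)

/-- The squared weighted Bergman norm `∫_{𝔻²} |g|² (1-|z₁|²)^β (1-|z₂|²)^β dA dA`. -/
def bNorm (β : ℝ) (g : ℂ × ℂ → ℂ) : ℝ≥0∞ :=
  ∫⁻ z in biD, (‖g z‖₊ : ℝ≥0∞) ^ 2 * w2 β z ∂dA2

/-- Boundedness of the composition operator `C_Φ : A²_α(𝔻²) → A²_β(𝔻²)`. -/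
def CompBounded (α β : ℝ) (Φ : ℂ × ℂ → ℂ × ℂ) : Prop :=
  ∃ C : ℝ, 0 < C ∧ ∀ f : ℂ × ℂ → ℂ, DifferentiableOn ℂ f biD →
    bNorm β (fun z => f (Φ z)) ≤ ENNReal.ofReal C * bNorm α f

/-- Evaluation of a two-variable polynomial at a point of `ℂ²`. -/
def ev2 (p : MvPolynomial (Fin 2) ℂ) (z : ℂ × ℂ) : ℂ :=
  MvPolynomial.eval ![z.1, z.2] p

/-- `pt` is the reflection `p̃(z₁,z₂) = z₁ⁿ z₂ᵐ conj (p (1/conj z₁, 1/conj z₂))` of `p`,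
where `(n,m)` is the bidegree of `p`. -/
def IsReflection (p pt : MvPolynomial (Fin 2) ℂ) : Prop :=
  ∀ z : ℂ × ℂ, z.1 ≠ 0 → z.2 ≠ 0 →
    ev2 pt z = z.1 ^ (MvPolynomial.degreeOf 0 p) * z.2 ^ (MvPolynomial.degreeOf 1 p) *
      (starRingEnd ℂ) (ev2 p (((starRingEnd ℂ) z.1)⁻¹, ((starRingEnd ℂ) z.2)⁻¹))

/-! ### Auxiliary material for Statement 16 -/

namespace Statement16Aux

lemma ofReal_norm_eq_coe_nnnorm (x : ℂ) : ENNReal.ofReal ‖x‖ = (‖x‖₊ : ℝ≥0∞) :=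
  ENNReal.ofReal_eq_coe_nnreal _

/-- The test function `f(z) = (1-z₁)^{-1/2} (1-z₂)^{-1/2}`. -/
def fT : ℂ × ℂ → ℂ := fun z => (1 - z.1) ^ (((-(1/2):ℝ)) : ℂ) * (1 - z.2) ^ (((-(1/2):ℝ)) : ℂ)

lemma fT_meas : Measurable fT :=
  ((measurable_const.sub measurable_fst).pow_const _).mul
    ((measurable_const.sub measurable_snd).pow_const _)

lemma fT_diff : DifferentiableOn ℂ fT biD := by
  intro z hz
  have h1 : (1 - z.1) ∈ Complex.slitPlane := by
    left
    simp only [Complex.sub_re, Complex.one_re]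
    have := lt_of_le_of_lt (Complex.abs_re_le_norm z.1) hz.1
    have := (abs_lt.mp this).2
    linarith
  have h2 : (1 - z.2) ∈ Complex.slitPlane := by
    left
    simp only [Complex.sub_re, Complex.one_re]
    have := lt_of_le_of_lt (Complex.abs_re_le_norm z.2) hz.2
    have := (abs_lt.mp this).2
    linarith
  apply DifferentiableAt.differentiableWithinAt
  apply DifferentiableAt.mul
  · exact ((differentiableAt_const _).sub differentiableAt_fst).cpow
      (differentiableAt_const _) h1
  · exact ((differentiableAt_const _).sub differentiableAt_snd).cpow
      (differentiableAt_const _) h2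

lemma sq_rpow_half (a : ℝ) (ha : 0 ≤ a) : (a ^ (-(1/2):ℝ))^2 = a⁻¹ := by
  rw [← Real.rpow_natCast (a ^ (-(1/2):ℝ)) 2, ← Real.rpow_mul ha]
  norm_num [Real.rpow_neg_one]

lemma fT_nnorm_sq (z : ℂ × ℂ) :
    ((‖fT z‖₊ : ℝ≥0∞))^2
      = ENNReal.ofReal ((‖1 - z.1‖)⁻¹ * (‖1 - z.2‖)⁻¹) := by
  rw [← ofReal_norm_eq_coe_nnnorm, ← ENNReal.ofReal_pow (norm_nonneg _)]
  congr 1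
  rw [show ‖fT z‖ = ‖fT z‖ from rfl]
  rw [fT, norm_mul, Complex.norm_cpow_real, Complex.norm_cpow_real]
  rw [mul_pow, sq_rpow_half _ (norm_nonneg _), sq_rpow_half _ (norm_nonneg _)]

/-! #### The 1D finiteness lemmas -/

lemma lint_rpow_fin (b : ℝ) (hb : 0 < b) :
    ∫⁻ t in Ioo (0:ℝ) b, ENNReal.ofReal (t ^ (-(1/2):ℝ)) < ⊤ := by
  have h : IntegrableOn (fun t : ℝ => t ^ (-(1/2):ℝ)) (Ioo 0 b) volume := by
    have h : IntervalIntegrable (fun x : ℝ => x ^ (-(1/2):ℝ)) volume 0 b :=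
      intervalIntegral.intervalIntegrable_rpow' (by norm_num)
    rw [intervalIntegrable_iff, uIoc_of_le hb.le] at h
    exact h.mono_set Ioo_subset_Ioc_self
  have h2 := h.2
  rw [HasFiniteIntegral] at h2
  refine lt_of_le_of_lt (le_of_eq ?_) h2
  refine setLIntegral_congr_fun measurableSet_Ioo ?_
  intro t ht
  exact (Real.enorm_eq_ofReal (Real.rpow_nonneg ht.1.le _)).symm

lemma lemA : ∫⁻ x in Ioo (-1:ℝ) 1, ENNReal.ofReal ((1-x) ^ (-(1/2):ℝ)) < ⊤ := by
  have hT : MeasurePreserving (fun x : ℝ => 1 - x) volume volume := by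
    have h1 : MeasurePreserving (fun x : ℝ => -x) volume volume := Measure.measurePreserving_neg _
    have h2 : MeasurePreserving (fun x : ℝ => 1 + x) volume volume :=
      measurePreserving_add_left volume 1
    convert h2.comp h1 using 1; funext x; simp [sub_eq_add_neg]
  have hpre : (fun x : ℝ => 1 - x) ⁻¹' (Ioo 0 2) = Ioo (-1:ℝ) 1 := by
    ext x
    simp only [mem_preimage, mem_Ioo]
    constructor
    · rintro ⟨h1, h2⟩; exact ⟨by linarith, by linarith⟩
    · rintro ⟨h1, h2⟩; exact ⟨by linarith, by linarith⟩
  have := hT.setLIntegral_comp_preimage (s := Ioo (0:ℝ) 2)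
    (f := fun t => ENNReal.ofReal (t ^ (-(1/2):ℝ))) measurableSet_Ioo
    (ENNReal.measurable_ofReal.comp ((measurable_id.pow_const _)))
  rw [hpre] at this
  rw [this]
  exact lint_rpow_fin 2 (by norm_num)

lemma lemB : ∫⁻ y in Ioo (-1:ℝ) 1, (ENNReal.ofReal |y|) ^ (-(1/2):ℝ) < ⊤ := by
  have hkey : ∀ s : Set ℝ, MeasurableSet s → (∫⁻ y in s, ENNReal.ofReal (|y| ^ (-(1/2):ℝ))) < ⊤ →
      (∀ᵐ y ∂(volume.restrict s), y ≠ 0) →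
      ∫⁻ y in s, (ENNReal.ofReal |y|) ^ (-(1/2):ℝ) < ⊤ := by
    intro s hs hfin hae
    refine lt_of_le_of_lt (le_of_eq (lintegral_congr_ae ?_)) hfin
    filter_upwards [hae] with y hy
    rw [← ENNReal.ofReal_rpow_of_pos (abs_pos.mpr hy)]
  have hsplit : Ioo (-1:ℝ) 1 = Ioo (-1:ℝ) 0 ∪ Ico (0:ℝ) 1 := by
    ext x
    simp only [mem_Ioo, mem_Ico, mem_union]
    constructor
    · rintro ⟨h1, h2⟩
      rcases lt_or_ge x 0 with h | h
      · exact Or.inl ⟨h1, h⟩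
      · exact Or.inr ⟨h, h2⟩
    · rintro (⟨h1, h2⟩ | ⟨h1, h2⟩) <;> exact ⟨by linarith, by linarith⟩
  have hdisj : Disjoint (Ioo (-1:ℝ) 0) (Ico (0:ℝ) 1) := by
    rw [Set.disjoint_left]
    rintro x ⟨_, h2⟩ ⟨h3, _⟩
    linarith
  rw [hsplit, lintegral_union measurableSet_Ico hdisj]
  have hpos : ∫⁻ y in Ico (0:ℝ) 1, (ENNReal.ofReal |y|) ^ (-(1/2):ℝ) < ⊤ := by
    rw [← Measure.restrict_congr_set Ioo_ae_eq_Ico]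
    refine hkey _ measurableSet_Ioo ?_ ?_
    · refine lt_of_le_of_lt (le_of_eq (setLIntegral_congr_fun measurableSet_Ioo
        (fun y hy => by rw [abs_of_pos hy.1]))) ?_
      exact lint_rpow_fin 1 one_pos
    · refine Filter.Eventually.mono (ae_restrict_mem measurableSet_Ioo) ?_
      intro y hy; exact ne_of_gt hy.1
  have hneg : ∫⁻ y in Ioo (-1:ℝ) 0, (ENNReal.ofReal |y|) ^ (-(1/2):ℝ) < ⊤ := by
    have hT : MeasurePreserving (fun x : ℝ => -x) volume volume := Measure.measurePreserving_neg _
    have hpre : (fun x : ℝ => -x) ⁻¹' (Ioo 0 1) = Ioo (-1:ℝ) 0 := by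
      ext x
      simp only [mem_preimage, mem_Ioo]
      constructor
      · rintro ⟨h1, h2⟩; exact ⟨by linarith, by linarith⟩
      · rintro ⟨h1, h2⟩; exact ⟨by linarith, by linarith⟩
    have := hT.setLIntegral_comp_preimage (s := Ioo (0:ℝ) 1)
      (f := fun t => (ENNReal.ofReal |t|) ^ (-(1/2):ℝ)) measurableSet_Ioo
      ((ENNReal.measurable_ofReal.comp measurable_abs).pow_const _)
    rw [hpre] at this
    have heq : ∫⁻ y in Ioo (-1:ℝ) 0, (ENNReal.ofReal |y|) ^ (-(1/2):ℝ)
        = ∫⁻ y in Ioo (-1:ℝ) 0, (ENNReal.ofReal |(-y)|) ^ (-(1/2):ℝ) := by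
      refine setLIntegral_congr_fun measurableSet_Ioo ?_
      intro y _; simp only [abs_neg]
    rw [heq]
    rw [this]
    refine hkey _ measurableSet_Ioo ?_ ?_
    · refine lt_of_le_of_lt (le_of_eq (setLIntegral_congr_fun measurableSet_Ioo
        (fun y hy => by rw [abs_of_pos hy.1]))) ?_
      exact lint_rpow_fin 1 one_pos
    · refine Filter.Eventually.mono (ae_restrict_mem measurableSet_Ioo) ?_
      intro y hy; exact ne_of_gt hy.1
  exact ENNReal.add_lt_top.mpr ⟨hneg, hpos⟩

/-! #### The upper bound: `fT` has finite Bergman norm -/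

def Sq : Set ℂ := Complex.measurableEquivRealProd ⁻¹' (Ioo (-1:ℝ) 1 ×ˢ Ioo (-1:ℝ) 1)

def gB : ℂ → ℝ≥0∞ := fun c =>
  ENNReal.ofReal ((1 - c.re) ^ (-(1/2):ℝ)) * (ENNReal.ofReal |c.im|) ^ (-(1/2):ℝ)

lemma gB_meas : Measurable gB := by
  refine Measurable.mul ?_ ?_
  · exact ENNReal.measurable_ofReal.comp ((measurable_const.sub Complex.measurable_re).pow_const _)
  · exact (ENNReal.measurable_ofReal.comp (Complex.measurable_im.abs)).pow_const _

lemma Sq_meas : MeasurableSet Sq :=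
  Complex.measurableEquivRealProd.measurable (measurableSet_Ioo.prod measurableSet_Ioo)

lemma mem_Sq {w : ℂ} (hw : ‖w‖ < 1) : w ∈ Sq := by
  have hre : |w.re| < 1 := lt_of_le_of_lt (Complex.abs_re_le_norm w) hw
  have him : |w.im| < 1 := lt_of_le_of_lt (Complex.abs_im_le_norm w) hw
  simp only [Sq, mem_preimage, Complex.measurableEquivRealProd_apply, mem_prod, mem_Ioo]
  exact ⟨abs_lt.mp hre, abs_lt.mp him⟩

lemma gB_int_fin : ∫⁻ c in Sq, gB c < ⊤ := by
  have hT : MeasurePreserving (⇑Complex.measurableEquivRealProd.symm) volume volume :=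
    Complex.volume_preserving_equiv_real_prod.symm _
  have hpre : (⇑Complex.measurableEquivRealProd.symm) ⁻¹' Sq
      = (Ioo (-1:ℝ) 1 ×ˢ Ioo (-1:ℝ) 1) := by
    ext p
    simp [Sq, mem_preimage]
  have key := hT.setLIntegral_comp_preimage (s := Sq) Sq_meas gB_meas
  rw [hpre] at key
  rw [← key]
  have heq : ∀ p : ℝ × ℝ, gB (Complex.measurableEquivRealProd.symm p)
      = ENNReal.ofReal ((1 - p.1) ^ (-(1/2):ℝ)) * (ENNReal.ofReal |p.2|) ^ (-(1/2):ℝ) := by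
    intro p; rfl
  simp only [heq]
  have hrestr : (volume : Measure (ℝ × ℝ)).restrict (Ioo (-1:ℝ) 1 ×ˢ Ioo (-1:ℝ) 1)
      = (volume.restrict (Ioo (-1:ℝ) 1)).prod (volume.restrict (Ioo (-1:ℝ) 1)) := by
    rw [Measure.volume_eq_prod, Measure.prod_restrict]
  rw [hrestr]
  rw [lintegral_prod_mul (f := fun x : ℝ => ENNReal.ofReal ((1 - x) ^ (-(1/2):ℝ)))
    (g := fun y : ℝ => (ENNReal.ofReal |y|) ^ (-(1/2):ℝ))
    (ENNReal.measurable_ofReal.comp ((measurable_const.sub measurable_id).pow_const _)).aemeasurable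
    ((ENNReal.measurable_ofReal.comp measurable_abs).pow_const _).aemeasurable]
  exact ENNReal.mul_lt_top lemA lemB

lemma factor_bound {w : ℂ} (hw : ‖w‖ < 1) :
    ENNReal.ofReal ((‖1 - w‖)⁻¹) ≤ gB w := by
  have hre : |w.re| < 1 := lt_of_le_of_lt (Complex.abs_re_le_norm w) hw
  have hx : 0 < 1 - w.re := by
    have := (abs_lt.mp hre).2; linarith
  rw [gB]
  rcases eq_or_ne w.im 0 with him | him
  · rw [him]
    simp only [abs_zero, ENNReal.ofReal_zero]
    rw [ENNReal.zero_rpow_of_neg (by norm_num)]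
    rw [ENNReal.mul_top (by
      simp only [ne_eq, ENNReal.ofReal_eq_zero, not_le]
      exact Real.rpow_pos_of_pos hx _)]
    exact le_top
  · have hy : 0 < |w.im| := abs_pos.mpr him
    rw [ENNReal.ofReal_rpow_of_pos hy, ← ENNReal.ofReal_mul (Real.rpow_nonneg hx.le _)]
    refine ENNReal.ofReal_le_ofReal ?_
    rw [← Real.mul_rpow hx.le hy.le]
    have habs : Real.sqrt ((1 - w.re) * |w.im|) ≤ ‖1 - w‖ := by
      rw [show ‖1 - w‖ = Real.sqrt (Complex.normSq (1 - w)) from rfl]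
      refine Real.sqrt_le_sqrt ?_
      rw [Complex.normSq_apply]
      simp only [Complex.sub_re, Complex.sub_im, Complex.one_re, Complex.one_im, zero_sub]
      have h2 : (1 - w.re) * |w.im| ≤ (1 - w.re)^2 + w.im^2 := by
        nlinarith [sq_nonneg (1 - w.re - |w.im|), _root_.sq_abs w.im, abs_nonneg w.im,
          sq_nonneg (1 - w.re)]
      nlinarith [_root_.sq_abs w.im]
    have hprod : 0 < (1 - w.re) * |w.im| := mul_pos hx hy
    rw [show (-(1/2):ℝ) = -(1/2) from rfl, Real.rpow_neg hprod.le, ← Real.sqrt_eq_rpow]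
    exact inv_anti₀ (Real.sqrt_pos.mpr hprod) habs

lemma upper_fin : ∫⁻ z in biD, ((‖fT z‖₊ : ℝ≥0∞))^2 ∂volume < ⊤ := by
  have hmono : ∫⁻ z in biD, ((‖fT z‖₊ : ℝ≥0∞))^2 ∂volume
      ≤ ∫⁻ z in biD, gB z.1 * gB z.2 ∂volume := by
    refine setLIntegral_mono ((gB_meas.comp measurable_fst).mul (gB_meas.comp measurable_snd)) ?_
    intro z hz
    rw [fT_nnorm_sq, ENNReal.ofReal_mul (inv_nonneg.mpr (norm_nonneg _))]
    exact mul_le_mul' (factor_bound hz.1) (factor_bound hz.2)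
  have hmono2 : ∫⁻ z in biD, gB z.1 * gB z.2 ∂volume
      ≤ ∫⁻ z in Sq ×ˢ Sq, gB z.1 * gB z.2 ∂volume :=
    lintegral_mono_set (fun z hz => ⟨mem_Sq hz.1, mem_Sq hz.2⟩)
  refine lt_of_le_of_lt (le_trans hmono hmono2) ?_
  have hrestr : (volume : Measure (ℂ × ℂ)).restrict (Sq ×ˢ Sq)
      = (volume.restrict Sq).prod (volume.restrict Sq) := by
    rw [Measure.volume_eq_prod, Measure.prod_restrict]
  rw [hrestr, lintegral_prod_mul gB_meas.aemeasurable gB_meas.aemeasurable]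
  exact ENNReal.mul_lt_top gB_int_fin gB_int_fin

/-! #### The lower bound: the composition has infinite Bergman norm -/

def eps (n : ℕ) : ℝ := (1/2:ℝ)^(n+1)

lemma eps_pos (n : ℕ) : 0 < eps n := by rw [eps]; positivity

lemma eps_le (n : ℕ) : eps n ≤ 1/2 := by
  rw [eps]
  calc (1/2:ℝ)^(n+1) ≤ (1/2:ℝ)^1 := by
        apply pow_le_pow_of_le_one (by norm_num) (by norm_num) (by omega)
  _ = 1/2 := pow_one _

lemma eps_anti {m n : ℕ} (h : m < n) : 2 * eps n ≤ eps m := by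
  rw [eps, eps, show 2 * (1/2:ℝ)^(n+1) = (1/2)^n * ((1/2) * 2) by ring]
  norm_num
  apply pow_le_pow_of_le_one (by norm_num) (by norm_num) (by omega)

def Qset (n : ℕ) : Set ℂ :=
  Complex.measurableEquivRealProd ⁻¹' (Ioo (1 - 2*eps n) (1 - eps n) ×ˢ Ioo 0 (eps n))

lemma Qset_meas (n : ℕ) : MeasurableSet (Qset n) :=
  Complex.measurableEquivRealProd.measurable (measurableSet_Ioo.prod measurableSet_Ioo)

lemma mem_Qset {n : ℕ} {w : ℂ} (hw : w ∈ Qset n) :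
    w.re ∈ Ioo (1 - 2*eps n) (1 - eps n) ∧ w.im ∈ Ioo 0 (eps n) := hw

lemma Qset_abs_lt {n : ℕ} {w : ℂ} (hw : w ∈ Qset n) : ‖w‖ < 1 := by
  obtain ⟨⟨hx1, hx2⟩, hy1, hy2⟩ := mem_Qset hw
  have he := eps_pos n
  have he2 := eps_le n
  have hsq : (‖w‖)^2 < 1 := by
    rw [Complex.sq_norm, Complex.normSq_apply]
    nlinarith
  nlinarith [norm_nonneg w]

lemma Qset_one_sub_le {n : ℕ} {w : ℂ} (hw : w ∈ Qset n) :
    ‖1 - w‖ ≤ 3 * eps n := by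
  obtain ⟨⟨hx1, hx2⟩, hy1, hy2⟩ := mem_Qset hw
  have he := eps_pos n
  have hsq : (‖1 - w‖)^2 ≤ (3 * eps n)^2 := by
    rw [Complex.sq_norm, Complex.normSq_apply]
    simp only [Complex.sub_re, Complex.sub_im, Complex.one_re, Complex.one_im, zero_sub]
    nlinarith
  nlinarith [norm_nonneg (1 - w)]

lemma Qset_vol (n : ℕ) : volume (Qset n) = ENNReal.ofReal (eps n) * ENNReal.ofReal (eps n) := by
  rw [Qset, MeasurePreserving.measure_preimage Complex.volume_preserving_equiv_real_prod
    ((measurableSet_Ioo.prod measurableSet_Ioo)).nullMeasurableSet]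
  rw [Measure.volume_eq_prod, Measure.prod_prod, Real.volume_Ioo, Real.volume_Ioo]
  congr 1 <;> ring_nf

lemma fT_diag (w : ℂ) : ‖fT (w, w)‖ = (‖1 - w‖)⁻¹ := by
  rw [fT]
  simp only
  rw [norm_mul, Complex.norm_cpow_real, ← sq]
  exact sq_rpow_half _ (norm_nonneg _)

lemma abs_one_ne {w : ℂ} (hw : ‖w‖ < 1) : (1 : ℂ) - w ≠ 0 := by
  intro h
  have : w = 1 := by linear_combination -h
  rw [this] at hw; simp at hw

lemma den_ne {z : ℂ × ℂ} (h1 : ‖z.1‖ < 1) (h2 : ‖z.2‖ < 1) :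
    (2:ℂ) - z.1 - z.2 ≠ 0 := by
  intro h
  have he : z.1 + z.2 = 2 := by linear_combination -h
  have := norm_add_le z.1 z.2
  rw [he] at this
  simp only [Complex.norm_two] at this
  linarith

lemma den_lb {z : ℂ × ℂ} (h1 : ‖z.1‖ < 1/2) (h2 : ‖z.2‖ < 1) :
    (1/2 : ℝ) ≤ ‖2 - z.1 - z.2‖ := by
  have key : ‖(2:ℂ)‖ ≤ ‖2 - z.1 - z.2‖ + ‖z.1 + z.2‖ := by
    calc ‖(2:ℂ)‖ = ‖(2 - z.1 - z.2) + (z.1 + z.2)‖ := by ring_nf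
    _ ≤ _ := norm_add_le _ _
  have h3 := norm_add_le z.1 z.2
  simp only [Complex.norm_two] at key
  linarith

lemma one_sub_phi {z : ℂ × ℂ} (h1 : ‖z.1‖ < 1) (h2 : ‖z.2‖ < 1) :
    (1:ℂ) - (-((2 * z.1 * z.2 - z.1 - z.2) / (2 - z.1 - z.2)))
      = 2 * (1 - z.1) * (1 - z.2) / (2 - z.1 - z.2) := by
  have hd := den_ne h1 h2
  field_simp
  ring

lemma norm_comp_lb {n : ℕ} {z : ℂ × ℂ} (h1 : ‖z.1‖ < 1/2)
    (h2 : ‖z.2‖ < 1) (h3 : ‖1 - z.2‖ ≤ 3 * eps n) :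
    (18 * eps n)⁻¹ ≤
      ‖fT (-((2 * z.1 * z.2 - z.1 - z.2) / (2 - z.1 - z.2)),
        -((2 * z.1 * z.2 - z.1 - z.2) / (2 - z.1 - z.2)))‖ := by
  have hepos := eps_pos n
  have h1' : ‖z.1‖ < 1 := lt_trans h1 (by norm_num)
  rw [fT_diag, one_sub_phi h1' h2]
  have hden := den_lb h1 h2
  have hne1 := abs_one_ne h1'
  have hne2 := abs_one_ne h2
  have hdne := den_ne h1' h2
  have habs : ‖2 * (1 - z.1) * (1 - z.2) / (2 - z.1 - z.2)‖ ≤ 18 * eps n := by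
    rw [norm_div, norm_mul, norm_mul, Complex.norm_two]
    rw [div_le_iff₀ (by positivity)]
    have hb1 : ‖1 - z.1‖ ≤ 3/2 := by
      calc ‖1 - z.1‖ ≤ ‖(1:ℂ)‖ + ‖z.1‖ := by
            calc ‖1 - z.1‖ ≤ ‖(1:ℂ)‖ + ‖-z.1‖ := by
                  simpa [sub_eq_add_neg] using norm_add_le 1 (-z.1)
            _ = ‖(1:ℂ)‖ + ‖z.1‖ := by rw [norm_neg]
      _ ≤ 3/2 := by rw [norm_one]; linarith
    calc 2 * ‖1 - z.1‖ * ‖1 - z.2‖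
        ≤ 2 * (3/2) * (3 * eps n) := by
          apply mul_le_mul _ h3 (norm_nonneg _) (by norm_num)
          nlinarith [norm_nonneg (1 - z.1)]
    _ = 9 * eps n := by ring
    _ ≤ 18 * eps n * (1/2) := by nlinarith
    _ ≤ 18 * eps n * ‖2 - z.1 - z.2‖ := by nlinarith
  have hpos : 0 < ‖2 * (1 - z.1) * (1 - z.2) / (2 - z.1 - z.2)‖ := by
    apply norm_pos_iff.mpr
    apply div_ne_zero _ hdne
    exact mul_ne_zero (mul_ne_zero two_ne_zero hne1) hne2
  exact inv_anti₀ hpos habs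

def Bhalf : Set ℂ := Metric.ball (0:ℂ) (1/2)

lemma Bhalf_mem {w : ℂ} (hw : w ∈ Bhalf) : ‖w‖ < 1/2 := by
  simpa [Bhalf, Metric.mem_ball, Complex.dist_eq] using hw

lemma Bhalf_vol_pos : 0 < volume Bhalf :=
  Metric.measure_ball_pos volume 0 (by norm_num)

def Sn (n : ℕ) : Set (ℂ × ℂ) := Bhalf ×ˢ Qset n

lemma Sn_meas (n : ℕ) : MeasurableSet (Sn n) :=
  measurableSet_ball.prod (Qset_meas n)

lemma Sn_disj : Pairwise (Function.onFun Disjoint Sn) := by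
  intro m n hmn
  rw [Function.onFun, Set.disjoint_left]
  rintro z ⟨_, hzm⟩ ⟨_, hzn⟩
  obtain ⟨⟨hm1, hm2⟩, _⟩ := mem_Qset hzm
  obtain ⟨⟨hn1, hn2⟩, _⟩ := mem_Qset hzn
  rcases hmn.lt_or_gt with h | h
  · have := eps_anti h
    linarith
  · have := eps_anti h
    linarith

lemma Sn_sub_biD (n : ℕ) : Sn n ⊆ biD := by
  rintro z ⟨hz1, hz2⟩
  exact ⟨lt_trans (Bhalf_mem hz1) (by norm_num), Qset_abs_lt hz2⟩

lemma comp_meas : Measurable (fun z : ℂ × ℂ =>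
    ((‖fT (-((2 * z.1 * z.2 - z.1 - z.2) / (2 - z.1 - z.2)),
      -((2 * z.1 * z.2 - z.1 - z.2) / (2 - z.1 - z.2)))‖₊ : ℝ≥0∞))^2) := by
  have hphi : Measurable fun z : ℂ × ℂ => -((2 * z.1 * z.2 - z.1 - z.2) / (2 - z.1 - z.2)) := by
    apply Measurable.neg
    apply Measurable.div
    · exact (((measurable_const.mul measurable_fst).mul measurable_snd).sub measurable_fst).sub
        measurable_snd
    · exact (measurable_const.sub measurable_fst).sub measurable_snd
  exact (measurable_coe_nnreal_ennreal.comp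
    (measurable_nnnorm.comp (fT_meas.comp (hphi.prodMk hphi)))).pow_const 2

lemma lower_top : ∫⁻ z in biD,
    ((‖fT (-((2 * z.1 * z.2 - z.1 - z.2) / (2 - z.1 - z.2)),
      -((2 * z.1 * z.2 - z.1 - z.2) / (2 - z.1 - z.2)))‖₊ : ℝ≥0∞))^2 ∂volume = ⊤ := by
  set N := fun z : ℂ × ℂ =>
    ((‖fT (-((2 * z.1 * z.2 - z.1 - z.2) / (2 - z.1 - z.2)),
      -((2 * z.1 * z.2 - z.1 - z.2) / (2 - z.1 - z.2)))‖₊ : ℝ≥0∞))^2 with hN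
  have hterm : ∀ n : ℕ, ENNReal.ofReal ((1:ℝ)/324) * volume Bhalf ≤ ∫⁻ z in Sn n, N z ∂volume := by
    intro n
    have hepos := eps_pos n
    have hlb : ∀ z ∈ Sn n, (ENNReal.ofReal ((18 * eps n)⁻¹))^2 ≤ N z := by
      rintro z ⟨hz1, hz2⟩
      have key := norm_comp_lb (n := n) (Bhalf_mem hz1) (Qset_abs_lt hz2) (Qset_one_sub_le hz2)
      rw [hN]
      simp only
      refine pow_le_pow_left' ?_ 2
      rw [← ofReal_norm_eq_coe_nnnorm]
      exact ENNReal.ofReal_le_ofReal key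
    have hint : (ENNReal.ofReal ((18 * eps n)⁻¹))^2 * volume (Sn n) ≤ ∫⁻ z in Sn n, N z ∂volume := by
      rw [← setLIntegral_const (Sn n) _]
      exact setLIntegral_mono comp_meas hlb
    refine le_trans (le_of_eq ?_) hint
    have hvol : volume (Sn n) = volume Bhalf * (ENNReal.ofReal (eps n) * ENNReal.ofReal (eps n)) := by
      rw [Sn, Measure.volume_eq_prod, Measure.prod_prod, Qset_vol]
    rw [hvol]
    have hc : (ENNReal.ofReal ((18 * eps n)⁻¹))^2 * (ENNReal.ofReal (eps n) * ENNReal.ofReal (eps n))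
        = ENNReal.ofReal ((1:ℝ)/324) := by
      rw [show (ENNReal.ofReal ((18 * eps n)⁻¹))^2 * (ENNReal.ofReal (eps n) * ENNReal.ofReal (eps n))
          = (ENNReal.ofReal ((18 * eps n)⁻¹) * ENNReal.ofReal (eps n))^2 by ring]
      rw [← ENNReal.ofReal_mul (by positivity)]
      rw [show (18 * eps n)⁻¹ * eps n = 1/18 by field_simp]
      rw [← ENNReal.ofReal_pow (by norm_num)]
      norm_num
    calc ENNReal.ofReal ((1:ℝ)/324) * volume Bhalf
        = (ENNReal.ofReal ((18 * eps n)⁻¹))^2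
            * (ENNReal.ofReal (eps n) * ENNReal.ofReal (eps n)) * volume Bhalf := by rw [hc]
    _ = (ENNReal.ofReal ((18 * eps n)⁻¹))^2
          * (volume Bhalf * (ENNReal.ofReal (eps n) * ENNReal.ofReal (eps n))) := by ring
  have hkappa : ENNReal.ofReal ((1:ℝ)/324) * volume Bhalf ≠ 0 := by
    apply mul_ne_zero
    · simp only [ne_eq, ENNReal.ofReal_eq_zero, not_le]
      norm_num
    · exact ne_of_gt Bhalf_vol_pos
  have htop : (⊤ : ℝ≥0∞) ≤ ∫⁻ z in biD, N z ∂volume := by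
    calc (⊤ : ℝ≥0∞) = ∑' _ : ℕ, ENNReal.ofReal ((1:ℝ)/324) * volume Bhalf :=
          (ENNReal.tsum_const_eq_top_of_ne_zero hkappa).symm
    _ ≤ ∑' n : ℕ, ∫⁻ z in Sn n, N z ∂volume := ENNReal.tsum_le_tsum hterm
    _ = ∫⁻ z in ⋃ n, Sn n, N z ∂volume := (lintegral_iUnion Sn_meas Sn_disj N).symm
    _ ≤ ∫⁻ z in biD, N z ∂volume := lintegral_mono_set (iUnion_subset Sn_sub_biD)
  exact top_unique htop

end Statement16Aux

/-- Example 5.2 of the paper. For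
`φ = -(2z₁z₂ - z₁ - z₂)/(2 - z₁ - z₂)` and `Φ = (φ,φ)`, the composition operator
`C_Φ : A²(𝔻²) → A²(𝔻²)` is not bounded. -/
theorem statement16 :
    ¬ CompBounded 0 0
        (fun z : ℂ × ℂ =>
          (-((2 * z.1 * z.2 - z.1 - z.2) / (2 - z.1 - z.2)),
           -((2 * z.1 * z.2 - z.1 - z.2) / (2 - z.1 - z.2)))) := by
  open Statement16Aux in
  rintro ⟨C, hCpos, hb⟩
  have h := hb fT fT_diff
  have hw2 : ∀ z : ℂ × ℂ, w2 0 z = 1 := by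
    intro z
    simp [w2, Real.rpow_zero]
  have hbn : ∀ g : ℂ × ℂ → ℂ, bNorm 0 g
      = (ENNReal.ofReal (Real.pi ^ 2))⁻¹ * ∫⁻ z in biD, ((‖g z‖₊ : ℝ≥0∞))^2 ∂volume := by
    intro g
    rw [bNorm]
    simp only [hw2, mul_one]
    rw [dA2, Measure.restrict_smul, lintegral_smul_measure, smul_eq_mul]
  set c := (ENNReal.ofReal (Real.pi ^ 2))⁻¹ with hcdef
  have hpi : 0 < Real.pi ^ 2 := by positivity
  have hc0 : c ≠ 0 := by
    rw [hcdef]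
    exact ENNReal.inv_ne_zero.mpr ENNReal.ofReal_ne_top
  have hct : c ≠ ⊤ := by
    rw [hcdef]
    exact ENNReal.inv_ne_top.mpr (by simpa [ENNReal.ofReal_eq_zero, not_le] using hpi)
  rw [hbn, hbn] at h
  have hLHS : c * (∫⁻ z in biD,
      ((‖fT (-((2 * z.1 * z.2 - z.1 - z.2) / (2 - z.1 - z.2)),
        -((2 * z.1 * z.2 - z.1 - z.2) / (2 - z.1 - z.2)))‖₊ : ℝ≥0∞))^2 ∂volume) = ⊤ := by
    rw [lower_top, ENNReal.mul_top hc0]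
  rw [hLHS] at h
  have hRHS : ENNReal.ofReal C * (c * ∫⁻ z in biD, ((‖fT z‖₊ : ℝ≥0∞))^2 ∂volume) ≠ ⊤ :=
    ENNReal.mul_ne_top ENNReal.ofReal_ne_top (ENNReal.mul_ne_top hct upper_fin.ne)
  exact hRHS (top_unique h)
end
end

section
/- Let φ(z₁,z₂) = -(2z₁z₂ - z₁ - z₂)/(2 - z₁ - z₂). Then for every (z₁,z₂) in the closed bidisc with (z₁,z₂) ≠ (1,1): |φ(z₁,z₂) - 1| = 2·|1-z₁|·|1-z₂|/|2-z₁-z₂| ≤ 4·|1-z₁|·|1-z₂|/(|1-z₁|² + |1-z₂|²). -/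
open Complex

lemma key18 (z : ℂ) (hz : ‖z‖ ≤ 1) :
    ‖1 - z‖ ^ 2 ≤ 2 * (1 - z).re := by
  have h1 : Complex.normSq z ≤ 1 := by
    rw [← Complex.sq_norm]
    nlinarith [norm_nonneg z]
  rw [Complex.sq_norm]
  simp only [Complex.normSq_apply, Complex.sub_re, Complex.sub_im, Complex.one_re,
    Complex.one_im]
  nlinarith [Complex.normSq_apply z, sq_nonneg z.im]

/-- estimate in Example 5.2 of the paper. For
`φ = -(2z₁z₂ - z₁ - z₂)/(2 - z₁ - z₂)` and `(z₁,z₂)` in the closed bidisc with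
`(z₁,z₂) ≠ (1,1)`:
`|φ(z) - 1| = 2|1-z₁||1-z₂|/|2-z₁-z₂| ≤ 4|1-z₁||1-z₂|/(|1-z₁|² + |1-z₂|²)`. -/
theorem statement18 :
    ∀ z₁ z₂ : ℂ, ‖z₁‖ ≤ 1 → ‖z₂‖ ≤ 1 → (z₁, z₂) ≠ ((1 : ℂ), (1 : ℂ)) →
      ‖-((2 * z₁ * z₂ - z₁ - z₂) / (2 - z₁ - z₂)) - 1‖ =
          2 * ‖1 - z₁‖ * ‖1 - z₂‖ / ‖2 - z₁ - z₂‖ ∧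
        ‖-((2 * z₁ * z₂ - z₁ - z₂) / (2 - z₁ - z₂)) - 1‖ ≤
          4 * ‖1 - z₁‖ * ‖1 - z₂‖ /
            (‖1 - z₁‖ ^ 2 + ‖1 - z₂‖ ^ 2) := by
  intro z₁ z₂ h1 h2 hne
  set a := ‖1 - z₁‖ with ha
  set b := ‖1 - z₂‖ with hb
  have ha2 : a ^ 2 ≤ 2 * (1 - z₁).re := key18 z₁ h1
  have hb2 : b ^ 2 ≤ 2 * (1 - z₂).re := key18 z₂ h2
  have hpos : 0 < a ^ 2 + b ^ 2 := by
    rcases lt_or_eq_of_le (by positivity : (0:ℝ) ≤ a ^ 2 + b ^ 2) with h | h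
    · exact h
    · exfalso
      have ha0 : a = 0 := by nlinarith [norm_nonneg (1 - z₁), norm_nonneg (1 - z₂)]
      have hb0 : b = 0 := by nlinarith [norm_nonneg (1 - z₁), norm_nonneg (1 - z₂)]
      have : z₁ = 1 := by
        have := norm_eq_zero.mp ha0; linear_combination -this
      have h2' : z₂ = 1 := by
        have := norm_eq_zero.mp hb0; linear_combination -this
      exact hne (by simp [this, h2'])
  have hdre : (a ^ 2 + b ^ 2) / 2 ≤ (2 - z₁ - z₂).re := by
    have : (2 - z₁ - z₂).re = (1 - z₁).re + (1 - z₂).re := by simp; ring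
    rw [this]; linarith
  have hd : (a ^ 2 + b ^ 2) / 2 ≤ ‖2 - z₁ - z₂‖ :=
    le_trans hdre (Complex.re_le_norm _)
  have hdpos : 0 < ‖2 - z₁ - z₂‖ := by linarith
  have hdne : (2 - z₁ - z₂) ≠ 0 := by
    intro h; rw [h] at hdpos; simp at hdpos
  have heq : -((2 * z₁ * z₂ - z₁ - z₂) / (2 - z₁ - z₂)) - 1
      = -(2 * (1 - z₁) * (1 - z₂)) / (2 - z₁ - z₂) := by
    field_simp; ring
  have habs : ‖-((2 * z₁ * z₂ - z₁ - z₂) / (2 - z₁ - z₂)) - 1‖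
      = 2 * a * b / ‖2 - z₁ - z₂‖ := by
    rw [heq, norm_div, norm_neg, norm_mul, norm_mul, Complex.norm_two]
  refine ⟨habs, ?_⟩
  rw [habs]
  have hab : 0 ≤ a * b := by positivity
  rw [div_le_div_iff₀ hdpos hpos]
  nlinarith [mul_le_mul_of_nonneg_left hd hab]
end
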